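/- A locally compact Hausdorff space X has a metrizable one-point compactification if and only if the topology of X is induced by a boundedly compact metric. -/

import Mathlib

open Set Filter Topology OnePoint

/-- Auxiliary: second countability of the one-point compactification. -/
theorem aux_secondCountable_onePoint {X : Type*} [TopologicalSpace X] [T2Space X]
    [LocallyCompactSpace X] [SigmaCompactSpace X] [SecondCountableTopology X] :
    SecondCountableTopology (OnePoint X) := by
  obtain ⟨B, hBc, -, hB⟩ := TopologicalSpace.exists_countable_basis X
  set K : CompactExhaustion X := CompactExhaustion.choice X
  set S : Set (Set (OnePoint X)) :=
    ((fun s : Set X => ((↑) '' s : Set (OnePoint X))) '' B) ∪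
      Set.range (fun n => (((↑) '' (K n) : Set (OnePoint X)))ᶜ) with hS
  have hSbasis : TopologicalSpace.IsTopologicalBasis S := by
    refine TopologicalSpace.isTopologicalBasis_of_isOpen_of_nhds ?_ ?_
    · rintro u (⟨b, hb, rfl⟩ | ⟨n, rfl⟩)
      · exact isOpen_image_coe.2 (hB.isOpen hb)
      · exact isOpen_compl_image_coe.2 ⟨(K.isCompact n).isClosed, K.isCompact n⟩
    · rintro (_ | x) u hau hu
      · -- a = ∞
        have hinfm : (∞ : OnePoint X) ∈ u := hau
        obtain ⟨hcl, hcpt⟩ := (isOpen_iff_of_mem hinfm).1 hu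
        obtain ⟨n, hn⟩ := K.exists_superset_of_isCompact hcpt
        refine ⟨(((↑) '' (K n) : Set (OnePoint X)))ᶜ, Or.inr ⟨n, rfl⟩, ?_, ?_⟩
        · exact mem_compl infty_notMem_image_coe
        · intro z hz
          rcases z with _ | y
          · exact hinfm
          · by_contra hzu
            exact hz (mem_image_of_mem _ (hn hzu))
      · -- a = coe x
        have hx : x ∈ ((↑) ⁻¹' u : Set X) := hau
        obtain ⟨b, hbB, hxb, hbu⟩ := hB.exists_subset_of_mem_open hx
          ((isOpenEmbedding_coe.continuous.isOpen_preimage) u hu)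
        exact ⟨(↑) '' b, Or.inl ⟨b, hbB, rfl⟩, mem_image_of_mem _ hxb,
          (image_subset_iff.2 hbu)⟩
  exact hSbasis.secondCountableTopology
    (hBc.image _ |>.union (countable_range _))

theorem stmt_19 {X : Type*} [TopologicalSpace X] [T2Space X] [LocallyCompactSpace X] :
    TopologicalSpace.MetrizableSpace (OnePoint X) ↔
      ∃ d : X → X → ℝ,
        (∀ x, d x x = 0) ∧ (∀ x y, d x y = 0 → x = y) ∧ (∀ x y, d x y = d y x) ∧
        (∀ x y z, d x z ≤ d x y + d y z) ∧
        (∀ s : Set X, IsOpen s ↔ ∀ x ∈ s, ∃ ε > 0, {y | d x y < ε} ⊆ s) ∧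
        (∀ s : Set X, IsClosed s → (∃ R, ∀ x ∈ s, ∀ y ∈ s, d x y ≤ R) → IsCompact s) := by
  constructor
  · intro h
    letI : MetricSpace (OnePoint X) := TopologicalSpace.metrizableSpaceMetric (OnePoint X)
    set f : X → ℝ := fun x => (dist (x : OnePoint X) ∞)⁻¹ with hf
    have hfpos : ∀ x : X, 0 < dist (x : OnePoint X) ∞ :=
      fun x => dist_pos.2 (coe_ne_infty x)
    have hfc : Continuous f :=
      (continuous_coe.dist continuous_const).inv₀ fun x => (hfpos x).ne'
    set d : X → X → ℝ := fun x y => dist (x : OnePoint X) y + |f x - f y| with hd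
    have hdge : ∀ x y : X, dist (x : OnePoint X) (y : OnePoint X) ≤ d x y := fun x y =>
      le_add_of_nonneg_right (abs_nonneg _)
    refine ⟨d, ?_, ?_, ?_, ?_, ?_, ?_⟩
    · intro x; simp [hd]
    · intro x y hxy
      have h1 : dist (x : OnePoint X) (y : OnePoint X) = 0 := by
        have h2 := abs_nonneg (f x - f y)
        have h3 : (0:ℝ) ≤ dist (x : OnePoint X) (y : OnePoint X) := dist_nonneg
        have h4 : dist (x : OnePoint X) (y : OnePoint X) + |f x - f y| = 0 := hxy
        linarith
      exact coe_injective (dist_eq_zero.1 h1)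
    · intro x y; simp [hd, dist_comm, abs_sub_comm]
    · intro x y z
      have h1 := dist_triangle (x : OnePoint X) y z
      have h2 := abs_sub (f x - f y) (f y - f z)
      simp only [hd]
      have h3 : |f x - f z| ≤ |f x - f y| + |f y - f z| := abs_sub_le _ _ _
      linarith
    · intro s
      constructor
      · intro hs x hxs
        have : IsOpen (((↑) : X → OnePoint X) '' s) := isOpen_image_coe.2 hs
        obtain ⟨ε, hε, hball⟩ := Metric.isOpen_iff.1 this _ (mem_image_of_mem _ hxs)
        refine ⟨ε, hε, fun y hy => ?_⟩
        have : (y : OnePoint X) ∈ (↑) '' s := by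
          apply hball
          rw [Metric.mem_ball, dist_comm]
          exact lt_of_le_of_lt (hdge x y) hy
        rcases this with ⟨y', hy', hyy⟩
        rwa [coe_injective hyy] at hy'
      · intro hs
        rw [isOpen_iff_mem_nhds]
        intro x hxs
        obtain ⟨ε, hε, hball⟩ := hs x hxs
        have hcont : Continuous (fun y => d x y) := by
          refine Continuous.add ?_ ?_
          · exact continuous_const.dist continuous_coe
          · exact (continuous_const.sub hfc).abs
        have hopen : IsOpen {y | d x y < ε} := isOpen_lt hcont continuous_const
        have hxmem : x ∈ {y | d x y < ε} := by simp [hd, hε]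
        exact mem_of_superset (hopen.mem_nhds hxmem) hball
    · intro s hscl ⟨R, hR⟩
      rcases s.eq_empty_or_nonempty with rfl | ⟨a, ha⟩
      · exact isCompact_empty
      -- every point of s is at distance ≥ c from ∞
      have hM : ∀ x ∈ s, f x ≤ f a + R := by
        intro x hxs
        have h1 : |f a - f x| ≤ d a x := le_add_of_nonneg_left dist_nonneg
        have h2 := hR a ha x hxs
        have := abs_le.1 (h1.trans h2)
        linarith [this.1]
      have hfa : 0 < f a := inv_pos.2 (hfpos a)
      have hMpos : 0 < f a + R := hfa.trans_le (hM a ha)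
      have hc : ∀ x ∈ s, (f a + R)⁻¹ ≤ dist (x : OnePoint X) ∞ := by
        intro x hxs
        rw [hf] at hM
        have hx := hM x hxs
        calc (f a + R)⁻¹ ≤ ((dist (x : OnePoint X) ∞)⁻¹)⁻¹ :=
              inv_anti₀ (inv_pos.2 (hfpos x)) hx
          _ = dist (x : OnePoint X) ∞ := inv_inv _
      -- closure of the image is compact and avoids ∞
      set C := closure (((↑) : X → OnePoint X) '' s) with hC
      have hCcpt : IsCompact C := isClosed_closure.isCompact
      have hinfm : ∞ ∉ C := by
        intro hmem
        obtain ⟨z, hz, hdist⟩ := Metric.mem_closure_iff.1 hmem _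
          (inv_pos.2 hMpos)
        obtain ⟨y, hys, rfl⟩ := hz
        exact absurd hdist (not_lt.2 (by rw [dist_comm]; exact hc y hys))
      have hpre : IsCompact (((↑) : X → OnePoint X) ⁻¹' C) := by
        rw [isOpenEmbedding_coe.isInducing.isCompact_iff]
        have : ((↑) : X → OnePoint X) '' ((↑) ⁻¹' C) = C := by
          rw [image_preimage_eq_iff]
          intro z hz
          rcases z with _ | y
          · exact absurd hz hinfm
          · exact mem_range_self y
        rwa [this]
      exact hpre.of_isClosed_subset hscl
        ((image_subset_iff.1 subset_closure : s ⊆ _))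
  · rintro ⟨d, h0, heq, hsymm, htri, hopen, hbc⟩
    letI m : MetricSpace X := MetricSpace.ofDistTopology d h0 hsymm htri
      (fun s => (hopen s).trans (by simp only [Set.subset_def, Set.mem_setOf_eq])) heq
    haveI : ProperSpace X := by
      constructor
      intro x r
      apply hbc
      · exact Metric.isClosed_closedBall
      · refine ⟨r + r, fun a ha b hb => (htri a x b).trans (add_le_add ?_ ?_)⟩
        · exact Metric.mem_closedBall.1 ha
        · have hb' : d b x ≤ r := Metric.mem_closedBall.1 hb
          rw [hsymm]; exact hb'
    haveI : SigmaCompactSpace X := inferInstance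
    haveI := aux_secondCountable_onePoint (X := X)
    infer_instance
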